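/- Let (A, B, C) be a recollement of triangulated categories with functors i^*, i_*, i^!, j_!, j^*, j_*. Let (E1, M1) and (E2, M2) be deflation factorization systems in A and C, respectively. Set E = {morphisms f in B | i^*(f) ∈ E1 and j^*(f) ∈ E2} and M = {morphisms g in B | i^!(g) ∈ M1 and j^*(g) ∈ M2}. Then (E, M) is a deflation factorization system in B. -/

import Mathlib

open CategoryTheory CategoryTheory.Limits CategoryTheory.Pretriangulated

namespace RecollementFS

variable (A B C : Type*) [Category A] [Category B] [Category C]
  [Preadditive A] [Preadditive B] [Preadditive C]
  [HasZeroObject A] [HasZeroObject B] [HasZeroObject C]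
  [HasShift A ℤ] [HasShift B ℤ] [HasShift C ℤ]
  [∀ n : ℤ, (shiftFunctor A n).Additive] [∀ n : ℤ, (shiftFunctor B n).Additive]
  [∀ n : ℤ, (shiftFunctor C n).Additive]
  [Pretriangulated A] [Pretriangulated B] [Pretriangulated C]

/-- A recollement of triangulated categories `(A, B, C)`. -/
structure TriangulatedRecollement where
  /-- `i_* : A ⥤ B` -/
  iStar : A ⥤ B
  /-- `i^* : B ⥤ A` -/
  iUpperStar : B ⥤ A
  /-- `i^! : B ⥤ A` -/
  iShriek : B ⥤ A
  /-- `j^* : B ⥤ C` -/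
  jUpperStar : B ⥤ C
  /-- `j_! : C ⥤ B` -/
  jShriek : C ⥤ B
  /-- `j_* : C ⥤ B` -/
  jStar : C ⥤ B
  iStar_commShift : iStar.CommShift ℤ
  iUpperStar_commShift : iUpperStar.CommShift ℤ
  iShriek_commShift : iShriek.CommShift ℤ
  jUpperStar_commShift : jUpperStar.CommShift ℤ
  jShriek_commShift : jShriek.CommShift ℤ
  jStar_commShift : jStar.CommShift ℤ
  iStar_triangulated : letI := iStar_commShift; iStar.IsTriangulated
  iUpperStar_triangulated : letI := iUpperStar_commShift; iUpperStar.IsTriangulated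
  iShriek_triangulated : letI := iShriek_commShift; iShriek.IsTriangulated
  jUpperStar_triangulated : letI := jUpperStar_commShift; jUpperStar.IsTriangulated
  jShriek_triangulated : letI := jShriek_commShift; jShriek.IsTriangulated
  jStar_triangulated : letI := jStar_commShift; jStar.IsTriangulated
  /-- `i^* ⊣ i_*` -/
  adj₁ : iUpperStar ⊣ iStar
  /-- `i_* ⊣ i^!` -/
  adj₂ : iStar ⊣ iShriek
  /-- `j_! ⊣ j^*` -/
  adj₃ : jShriek ⊣ jUpperStar
  /-- `j^* ⊣ j_*` -/
  adj₄ : jUpperStar ⊣ jStar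
  iStar_full : iStar.Full
  iStar_faithful : iStar.Faithful
  jShriek_full : jShriek.Full
  jShriek_faithful : jShriek.Faithful
  jStar_full : jStar.Full
  jStar_faithful : jStar.Faithful
  /-- `j^*(X) ≅ 0` iff `X` lies in the essential image of `i_*`. -/
  isZero_iff : ∀ X : B, IsZero (jUpperStar.obj X) ↔ ∃ Y : A, Nonempty (iStar.obj Y ≅ X)
  /-- the distinguished triangle `i_* i^! X ⟶ X ⟶ j_* j^* X ⟶ (i_* i^! X)⟦1⟧`. -/
  triangle₁ : ∀ X : B, ∃ h : jStar.obj (jUpperStar.obj X) ⟶ (iStar.obj (iShriek.obj X))⟦(1 : ℤ)⟧,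
    Triangle.mk (adj₂.counit.app X) (adj₄.unit.app X) h ∈ distTriang B
  /-- the distinguished triangle `j_! j^* X ⟶ X ⟶ i_* i^* X ⟶ (j_! j^* X)⟦1⟧`. -/
  triangle₂ : ∀ X : B, ∃ h : iStar.obj (iUpperStar.obj X) ⟶ (jShriek.obj (jUpperStar.obj X))⟦(1 : ℤ)⟧,
    Triangle.mk (adj₃.counit.app X) (adj₁.unit.app X) h ∈ distTriang B

variable {𝒟 : Type*} [Category 𝒟] [Preadditive 𝒟] [HasZeroObject 𝒟]
  [HasShift 𝒟 ℤ] [∀ n : ℤ, (shiftFunctor 𝒟 n).Additive] [Pretriangulated 𝒟]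

/-- `K` is a cocone of `f : X ⟶ Y` if it fits in a distinguished triangle
`K ⟶ X ⟶ Y ⟶ K⟦1⟧`. -/
def IsCoconeOf {X Y : 𝒟} (f : X ⟶ Y) (K : 𝒟) : Prop :=
  ∃ (g : K ⟶ X) (h : Y ⟶ K⟦(1 : ℤ)⟧), Triangle.mk g f h ∈ distTriang 𝒟

/-- `l ⊥ r` iff `Hom(K_l, K_r) = 0` and `Hom(K_l, K_r⟦-1⟧) = 0` for cocones
`K_l` of `l` and `K_r` of `r`. -/
def CoconePerp {X Y Z W : 𝒟} (l : X ⟶ Y) (r : Z ⟶ W) : Prop :=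
  ∀ (Kl Kr : 𝒟), IsCoconeOf l Kl → IsCoconeOf r Kr →
    (∀ φ : Kl ⟶ Kr, φ = 0) ∧ (∀ φ : Kl ⟶ Kr⟦(-1 : ℤ)⟧, φ = 0)

/-- A deflation factorization system `(L, R)` in a triangulated category. -/
structure IsDeflFactorizationSystem (L R : MorphismProperty 𝒟) : Prop where
  factor : ∀ {X Y : 𝒟} (f : X ⟶ Y),
    ∃ (K : 𝒟) (l : X ⟶ K) (r : K ⟶ Y), L l ∧ R r ∧ l ≫ r = f
  left_eq : ∀ {X Y : 𝒟} (f : X ⟶ Y),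
    L f ↔ ∀ {Z W : 𝒟} (g : Z ⟶ W), R g → CoconePerp f g
  right_eq : ∀ {Z W : 𝒟} (g : Z ⟶ W),
    R g ↔ ∀ {X Y : 𝒟} (f : X ⟶ Y), L f → CoconePerp f g

section Helpers

set_option linter.unusedSectionVars false

lemma exists_cocone {X Y : 𝒟} (f : X ⟶ Y) : ∃ K, IsCoconeOf f K := by
  obtain ⟨K, g, h, hT⟩ := distinguished_cocone_triangle₁ f
  exact ⟨K, g, h, hT⟩

lemma IsCoconeOf.of_isos {X Y X' Y' K K' : 𝒟} {f : X ⟶ Y} {f' : X' ⟶ Y'}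
    (hc : IsCoconeOf f K) (eK : K ≅ K') (eX : X ≅ X') (eY : Y ≅ Y')
    (comm : f ≫ eY.hom = eX.hom ≫ f') : IsCoconeOf f' K' := by
  obtain ⟨g, δ, hT⟩ := hc
  refine ⟨eK.inv ≫ g ≫ eX.hom, eY.inv ≫ δ ≫ (shiftFunctor 𝒟 (1:ℤ)).map eK.hom, ?_⟩
  refine isomorphic_distinguished _ hT _
    (Triangle.isoMk _ _ eK.symm eX.symm eY.symm ?_ ?_ ?_)
  · change (eK.inv ≫ g ≫ eX.hom) ≫ eX.inv = eK.inv ≫ g; simp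
  · change f' ≫ eY.inv = eX.inv ≫ f
    rw [← cancel_epi eX.hom, ← reassoc_of% comm]
    simp
  · change (eY.inv ≫ δ ≫ (shiftFunctor 𝒟 (1:ℤ)).map eK.hom) ≫ (shiftFunctor 𝒟 (1:ℤ)).map eK.inv = eY.inv ≫ δ
    simp only [Category.assoc, ← Functor.map_comp, Iso.hom_inv_id]
    simp

lemma IsCoconeOf.map {𝒟' : Type*} [Category 𝒟'] [Preadditive 𝒟'] [HasZeroObject 𝒟']
    [HasShift 𝒟' ℤ] [∀ n : ℤ, (shiftFunctor 𝒟' n).Additive] [Pretriangulated 𝒟']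
    {X Y K : 𝒟} {f : X ⟶ Y} (hc : IsCoconeOf f K)
    (F : 𝒟 ⥤ 𝒟') [F.CommShift ℤ] [F.IsTriangulated] :
    IsCoconeOf (F.map f) (F.obj K) := by
  obtain ⟨g, δ, hT⟩ := hc
  exact ⟨F.map g, F.map δ ≫ (F.commShiftIso (1:ℤ)).hom.app K, F.map_distinguished _ hT⟩

lemma IsCoconeOf.unique_up_to_iso {X Y K K' : 𝒟} {f : X ⟶ Y}
    (h : IsCoconeOf f K) (h' : IsCoconeOf f K') : Nonempty (K ≅ K') := by
  obtain ⟨g, δ, hT⟩ := h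
  obtain ⟨g', δ', hT'⟩ := h'
  have e := isoTriangleOfIso₁₂ _ _ (rot_of_distTriang _ hT) (rot_of_distTriang _ hT')
    (Iso.refl X) (Iso.refl Y) (by change f ≫ 𝟙 Y = 𝟙 X ≫ f; simp)
  exact ⟨(shiftFunctor 𝒟 (1:ℤ)).preimageIso (Triangle.π₃.mapIso e)⟩

lemma IsCoconeOf.isZero_of_isIso {X Y K : 𝒟} {f : X ⟶ Y}
    (h : IsCoconeOf f K) (hf : IsIso f) : IsZero K := by
  obtain ⟨g, δ, hT⟩ := h
  exact Triangle.isZero₁_of_isIso₂ _ hT hf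

lemma IsCoconeOf.comp_iso_right {X Y Y' K : 𝒟} {f : X ⟶ Y}
    (h : IsCoconeOf f K) (e : Y ⟶ Y') [IsIso e] : IsCoconeOf (f ≫ e) K :=
  h.of_isos (Iso.refl _) (Iso.refl _) (asIso e) (by simp)

lemma IsCoconeOf.of_iso_cocone {X Y K K' : 𝒟} {f : X ⟶ Y}
    (h : IsCoconeOf f K) (e : K ≅ K') : IsCoconeOf f K' :=
  h.of_isos e (Iso.refl _) (Iso.refl _) (by simp)

/-- vanishing of morphisms in degrees `0` and `-1`. -/
def PerpObjs (P Q : 𝒟) : Prop :=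
  (∀ φ : P ⟶ Q, φ = 0) ∧ (∀ φ : P ⟶ Q⟦(-1 : ℤ)⟧, φ = 0)

lemma PerpObjs.of_isos {P Q P' Q' : 𝒟} (h : PerpObjs P Q) (eP : P ≅ P') (eQ : Q ≅ Q') :
    PerpObjs P' Q' := by
  constructor
  · intro φ
    have : eP.hom ≫ φ ≫ eQ.inv = 0 := h.1 _
    rw [← cancel_epi eP.hom, ← cancel_mono eQ.inv]
    simpa using this
  · intro φ
    have : eP.hom ≫ φ ≫ (shiftFunctor 𝒟 (-1:ℤ)).map eQ.inv = 0 := h.2 _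
    rw [← cancel_epi eP.hom, ← cancel_mono ((shiftFunctor 𝒟 (-1:ℤ)).map eQ.inv)]
    simpa using this

lemma coconePerp_iff {X Y Z W Kl Kr : 𝒟} {l : X ⟶ Y} {r : Z ⟶ W}
    (hl : IsCoconeOf l Kl) (hr : IsCoconeOf r Kr) :
    CoconePerp l r ↔ PerpObjs Kl Kr := by
  constructor
  · intro h
    exact h Kl Kr hl hr
  · intro h Kl' Kr' hl' hr'
    obtain ⟨e⟩ := hl.unique_up_to_iso hl'
    obtain ⟨e'⟩ := hr.unique_up_to_iso hr'
    exact h.of_isos e e'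

namespace IsDeflFactorizationSystem

variable {L R : MorphismProperty 𝒟} (h : IsDeflFactorizationSystem L R)
include h

lemma perp {X Y Z W : 𝒟} {l : X ⟶ Y} {r : Z ⟶ W} (hl : L l) (hr : R r) :
    CoconePerp l r :=
  (h.left_eq l).1 hl r hr

lemma mem_left_congr {X Y X' Y' : 𝒟} {f : X ⟶ Y} {f' : X' ⟶ Y'} (K : 𝒟)
    (hf : IsCoconeOf f K) (hf' : IsCoconeOf f' K) (hL : L f) : L f' := by
  rw [h.left_eq]
  intro Z W g hg
  obtain ⟨Kg, hKg⟩ := exists_cocone g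
  exact (coconePerp_iff hf' hKg).2 ((coconePerp_iff hf hKg).1 (h.perp hL hg))

lemma mem_right_congr {X Y X' Y' : 𝒟} {g : X ⟶ Y} {g' : X' ⟶ Y'} (K : 𝒟)
    (hg : IsCoconeOf g K) (hg' : IsCoconeOf g' K) (hR : R g) : R g' := by
  rw [h.right_eq]
  intro Z W f hf
  obtain ⟨Kf, hKf⟩ := exists_cocone f
  exact (coconePerp_iff hKf hg').2 ((coconePerp_iff hKf hg).1 (h.perp hf hR))

lemma mem_of_isZero {Z W : 𝒟} (g : Z ⟶ W) (hZ : IsZero Z) (hW : IsZero W) :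
    L g ∧ R g := by
  have hIso : IsIso g := ⟨0, hZ.eq_of_src _ _, hW.eq_of_src _ _⟩
  constructor
  · rw [h.left_eq]
    intro _ _ g' _ Kl Kr hKl _
    have hz : IsZero Kl := hKl.isZero_of_isIso hIso
    exact ⟨fun φ => hz.eq_of_src _ _, fun φ => hz.eq_of_src _ _⟩
  · rw [h.right_eq]
    intro _ _ f _ Kl Kr _ hKr
    have hz : IsZero Kr := hKr.isZero_of_isIso hIso
    have hz' : IsZero ((Kr)⟦(-1:ℤ)⟧) := by
      rw [IsZero.iff_id_eq_zero] at hz ⊢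
      rw [← CategoryTheory.Functor.map_id (shiftFunctor 𝒟 (-1:ℤ)) Kr, hz,
        CategoryTheory.Functor.map_zero]
    exact ⟨fun φ => hz.eq_of_tgt _ _, fun φ => hz'.eq_of_tgt _ _⟩

end IsDeflFactorizationSystem

lemma homEquiv_symm_zero {C' D' : Type*} [Category C'] [Category D']
    [Limits.HasZeroMorphisms C'] [Limits.HasZeroMorphisms D']
    {F : C' ⥤ D'} {G : D' ⥤ C'} (adj : F ⊣ G) [F.PreservesZeroMorphisms] {X : C'} {Y : D'} :
    (adj.homEquiv X Y).symm 0 = 0 := by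
  rw [Adjunction.homEquiv_counit, Functor.map_zero, zero_comp]

lemma homEquiv_zero {C' D' : Type*} [Category C'] [Category D']
    [Limits.HasZeroMorphisms C'] [Limits.HasZeroMorphisms D']
    {F : C' ⥤ D'} {G : D' ⥤ C'} (adj : F ⊣ G) [G.PreservesZeroMorphisms] {X : C'} {Y : D'} :
    (adj.homEquiv X Y) 0 = 0 := by
  rw [Adjunction.homEquiv_unit, Functor.map_zero, comp_zero]

end Helpers

namespace TriangulatedRecollement

variable {A B C}

lemma isZero_jU_iS (R : TriangulatedRecollement A B C) (X : A) :
    IsZero (R.jUpperStar.obj (R.iStar.obj X)) :=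
  (R.isZero_iff _).2 ⟨X, ⟨Iso.refl _⟩⟩

lemma isZero_iSh_jSt (R : TriangulatedRecollement A B C) (Y : C) :
    IsZero (R.iShriek.obj (R.jStar.obj Y)) := by
  rw [IsZero.iff_id_eq_zero]
  apply (R.adj₂.homEquiv _ _).symm.injective
  apply (R.adj₄.homEquiv _ _).symm.injective
  exact (R.isZero_jU_iS _).eq_of_src _ _

lemma isZero_iU_jSh (R : TriangulatedRecollement A B C) (Y : C) :
    IsZero (R.iUpperStar.obj (R.jShriek.obj Y)) := by
  rw [IsZero.iff_id_eq_zero]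
  apply (R.adj₁.homEquiv _ _).injective
  apply (R.adj₃.homEquiv _ _).injective
  exact (R.isZero_jU_iS _).eq_of_tgt _ _

variable (R : TriangulatedRecollement A B C)
  {E₁ M₁ : MorphismProperty A} {E₂ M₂ : MorphismProperty C}
  (hA : IsDeflFactorizationSystem E₁ M₁) (hC : IsDeflFactorizationSystem E₂ M₂)

include hA hC

lemma iStar_map_mem_M {Z W : A} {g₁ : Z ⟶ W} (hg : M₁ g₁) :
    M₁ (R.iShriek.map (R.iStar.map g₁)) ∧ M₂ (R.jUpperStar.map (R.iStar.map g₁)) := by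
  letI := R.iStar_commShift; letI := R.iShriek_commShift
  haveI := R.iStar_triangulated; haveI := R.iShriek_triangulated
  haveI := R.iStar_full; haveI := R.iStar_faithful
  constructor
  · obtain ⟨Kr, hKr⟩ := exists_cocone g₁
    have h2 : IsCoconeOf (R.iShriek.map (R.iStar.map g₁)) Kr := by
      refine hKr.of_isos (Iso.refl _) (asIso (R.adj₂.unit.app Z))
        (asIso (R.adj₂.unit.app W)) ?_
      simpa using R.adj₂.unit.naturality g₁
    exact hA.mem_right_congr Kr hKr h2 hg
  · exact (hC.mem_of_isZero _ (R.isZero_jU_iS Z) (R.isZero_jU_iS W)).2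

lemma jStar_map_mem_M {Z W : C} {g₂ : Z ⟶ W} (hg : M₂ g₂) :
    M₁ (R.iShriek.map (R.jStar.map g₂)) ∧ M₂ (R.jUpperStar.map (R.jStar.map g₂)) := by
  letI := R.jStar_commShift; letI := R.jUpperStar_commShift
  haveI := R.jStar_triangulated; haveI := R.jUpperStar_triangulated
  haveI := R.jStar_full; haveI := R.jStar_faithful
  constructor
  · exact (hA.mem_of_isZero _ (R.isZero_iSh_jSt Z) (R.isZero_iSh_jSt W)).2
  · obtain ⟨Kr, hKr⟩ := exists_cocone g₂
    have h2 : IsCoconeOf (R.jUpperStar.map (R.jStar.map g₂)) Kr := by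
      refine hKr.of_isos (Iso.refl _) (asIso (R.adj₄.counit.app Z)).symm
        (asIso (R.adj₄.counit.app W)).symm ?_
      have nat := R.adj₄.counit.naturality g₂
      dsimp at nat ⊢
      rw [IsIso.comp_inv_eq, Category.assoc, IsIso.eq_inv_comp]
      exact nat.symm
    exact hC.mem_right_congr Kr hKr h2 hg

lemma iStar_map_mem_E {Z W : A} {f₁ : Z ⟶ W} (hf : E₁ f₁) :
    E₁ (R.iUpperStar.map (R.iStar.map f₁)) ∧ E₂ (R.jUpperStar.map (R.iStar.map f₁)) := by
  letI := R.iStar_commShift; letI := R.iUpperStar_commShift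
  haveI := R.iStar_triangulated; haveI := R.iUpperStar_triangulated
  haveI := R.iStar_full; haveI := R.iStar_faithful
  constructor
  · obtain ⟨Kl, hKl⟩ := exists_cocone f₁
    have h2 : IsCoconeOf (R.iUpperStar.map (R.iStar.map f₁)) Kl := by
      refine hKl.of_isos (Iso.refl _) (asIso (R.adj₁.counit.app Z)).symm
        (asIso (R.adj₁.counit.app W)).symm ?_
      have nat := R.adj₁.counit.naturality f₁
      dsimp at nat ⊢
      rw [IsIso.comp_inv_eq, Category.assoc, IsIso.eq_inv_comp]
      exact nat.symm
    exact hA.mem_left_congr Kl hKl h2 hf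
  · exact (hC.mem_of_isZero _ (R.isZero_jU_iS Z) (R.isZero_jU_iS W)).1

lemma jShriek_map_mem_E {Z W : C} {f₂ : Z ⟶ W} (hf : E₂ f₂) :
    E₁ (R.iUpperStar.map (R.jShriek.map f₂)) ∧ E₂ (R.jUpperStar.map (R.jShriek.map f₂)) := by
  letI := R.jShriek_commShift; letI := R.jUpperStar_commShift
  haveI := R.jShriek_triangulated; haveI := R.jUpperStar_triangulated
  haveI := R.jShriek_full; haveI := R.jShriek_faithful
  constructor
  · exact (hA.mem_of_isZero _ (R.isZero_iU_jSh Z) (R.isZero_iU_jSh W)).1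
  · obtain ⟨Kl, hKl⟩ := exists_cocone f₂
    have h2 : IsCoconeOf (R.jUpperStar.map (R.jShriek.map f₂)) Kl := by
      refine hKl.of_isos (Iso.refl _) (asIso (R.adj₃.unit.app Z))
        (asIso (R.adj₃.unit.app W)) ?_
      simpa using R.adj₃.unit.naturality f₂
    exact hC.mem_left_congr Kl hKl h2 hf



lemma glue_perp {X Y Z W : B} (f : X ⟶ Y) (g : Z ⟶ W)
    (hf : E₁ (R.iUpperStar.map f) ∧ E₂ (R.jUpperStar.map f))
    (hg : M₁ (R.iShriek.map g) ∧ M₂ (R.jUpperStar.map g)) :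
    CoconePerp f g := by
  letI := R.iStar_commShift; letI := R.iUpperStar_commShift; letI := R.iShriek_commShift
  letI := R.jUpperStar_commShift; letI := R.jShriek_commShift; letI := R.jStar_commShift
  haveI := R.iStar_triangulated; haveI := R.iUpperStar_triangulated
  haveI := R.iShriek_triangulated; haveI := R.jUpperStar_triangulated
  haveI := R.jShriek_triangulated; haveI := R.jStar_triangulated
  intro Kf Kg hKf hKg
  have pC : PerpObjs (R.jUpperStar.obj Kf) (R.jUpperStar.obj Kg) :=
    (coconePerp_iff (hKf.map R.jUpperStar) (hKg.map R.jUpperStar)).1 (hC.perp hf.2 hg.2)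
  have pA : PerpObjs (R.iUpperStar.obj Kf) (R.iShriek.obj Kg) :=
    (coconePerp_iff (hKf.map R.iUpperStar) (hKg.map R.iShriek)).1 (hA.perp hf.1 hg.1)
  obtain ⟨h₂, hT⟩ := R.triangle₂ Kf
  have key : ∀ (Q : B), (∀ ψ : R.jUpperStar.obj Kf ⟶ R.jUpperStar.obj Q, ψ = 0) →
      (∀ ψ : R.iUpperStar.obj Kf ⟶ R.iShriek.obj Q, ψ = 0) → ∀ φ : Kf ⟶ Q, φ = 0 := by
    intro Q hq1 hq2 φ
    have h0 : (Triangle.mk (R.adj₃.counit.app Kf) (R.adj₁.unit.app Kf) h₂).mor₁ ≫ φ = 0 := by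
      change R.adj₃.counit.app Kf ≫ φ = 0
      have nat := R.adj₃.counit.naturality φ
      dsimp at nat
      rw [← nat, hq1 (R.jUpperStar.map φ), Functor.map_zero, zero_comp]
    obtain ⟨ψ₀, hψ₀⟩ := Triangle.yoneda_exact₂ _ hT φ h0
    have hz : ψ₀ = 0 := by
      have h1 : (R.adj₂.homEquiv (R.iUpperStar.obj Kf) Q) ψ₀ = 0 := hq2 _
      have h2 := congrArg (R.adj₂.homEquiv (R.iUpperStar.obj Kf) Q).symm h1
      exact (R.adj₂.homEquiv (R.iUpperStar.obj Kf) Q).injective (h1.trans (homEquiv_zero R.adj₂).symm)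
    rw [hψ₀, hz]; exact comp_zero
  constructor
  · exact key Kg pC.1 pA.1
  · refine key (Kg⟦(-1:ℤ)⟧) ?_ ?_
    · intro ψ
      have h3 : ψ ≫ ((R.jUpperStar.commShiftIso (-1:ℤ)).hom.app Kg) = 0 := pC.2 _
      rw [← cancel_mono ((R.jUpperStar.commShiftIso (-1:ℤ)).hom.app Kg)]
      simpa using h3
    · intro ψ
      have h3 : ψ ≫ ((R.iShriek.commShiftIso (-1:ℤ)).hom.app Kg) = 0 := pA.2 _
      rw [← cancel_mono ((R.iShriek.commShiftIso (-1:ℤ)).hom.app Kg)]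
      simpa using h3

lemma glue_left {X Y : B} (f : X ⟶ Y)
    (h : ∀ {Z W : B} (g : Z ⟶ W),
      (M₁ (R.iShriek.map g) ∧ M₂ (R.jUpperStar.map g)) → CoconePerp f g) :
    E₁ (R.iUpperStar.map f) ∧ E₂ (R.jUpperStar.map f) := by
  letI := R.iStar_commShift; letI := R.iUpperStar_commShift; letI := R.iShriek_commShift
  letI := R.jUpperStar_commShift; letI := R.jShriek_commShift; letI := R.jStar_commShift
  haveI := R.iStar_triangulated; haveI := R.iUpperStar_triangulated
  haveI := R.iShriek_triangulated; haveI := R.jUpperStar_triangulated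
  haveI := R.jShriek_triangulated; haveI := R.jStar_triangulated
  obtain ⟨Kf, hKf⟩ := exists_cocone f
  constructor
  · rw [hA.left_eq]
    intro Z W g₁ hg₁
    obtain ⟨Kr, hKr⟩ := exists_cocone g₁
    have hp : PerpObjs Kf (R.iStar.obj Kr) :=
      (coconePerp_iff hKf (hKr.map R.iStar)).1 (h _ (R.iStar_map_mem_M hA hC hg₁))
    refine (coconePerp_iff (hKf.map R.iUpperStar) hKr).2 ⟨?_, ?_⟩
    · intro φ
      have h1 : (R.adj₁.homEquiv Kf Kr) φ = 0 := hp.1 _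
      have h2 := congrArg (R.adj₁.homEquiv Kf Kr).symm h1
      rwa [Equiv.symm_apply_apply, homEquiv_symm_zero] at h2
    · intro φ
      have h1 : (R.adj₁.homEquiv Kf (Kr⟦(-1:ℤ)⟧)) φ = 0 := by
        have h3 : ((R.adj₁.homEquiv Kf (Kr⟦(-1:ℤ)⟧)) φ) ≫
            ((R.iStar.commShiftIso (-1:ℤ)).hom.app Kr) = 0 := hp.2 _
        rw [← cancel_mono ((R.iStar.commShiftIso (-1:ℤ)).hom.app Kr)]
        simpa using h3
      have h2 := congrArg (R.adj₁.homEquiv Kf (Kr⟦(-1:ℤ)⟧)).symm h1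
      rwa [Equiv.symm_apply_apply, homEquiv_symm_zero] at h2
  · rw [hC.left_eq]
    intro Z W g₂ hg₂
    obtain ⟨Kr, hKr⟩ := exists_cocone g₂
    have hp : PerpObjs Kf (R.jStar.obj Kr) :=
      (coconePerp_iff hKf (hKr.map R.jStar)).1 (h _ (R.jStar_map_mem_M hA hC hg₂))
    refine (coconePerp_iff (hKf.map R.jUpperStar) hKr).2 ⟨?_, ?_⟩
    · intro φ
      have h1 : (R.adj₄.homEquiv Kf Kr) φ = 0 := hp.1 _
      have h2 := congrArg (R.adj₄.homEquiv Kf Kr).symm h1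
      rwa [Equiv.symm_apply_apply, homEquiv_symm_zero] at h2
    · intro φ
      have h1 : (R.adj₄.homEquiv Kf (Kr⟦(-1:ℤ)⟧)) φ = 0 := by
        have h3 : ((R.adj₄.homEquiv Kf (Kr⟦(-1:ℤ)⟧)) φ) ≫
            ((R.jStar.commShiftIso (-1:ℤ)).hom.app Kr) = 0 := hp.2 _
        rw [← cancel_mono ((R.jStar.commShiftIso (-1:ℤ)).hom.app Kr)]
        simpa using h3
      have h2 := congrArg (R.adj₄.homEquiv Kf (Kr⟦(-1:ℤ)⟧)).symm h1
      rwa [Equiv.symm_apply_apply, homEquiv_symm_zero] at h2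

lemma glue_right {Z W : B} (g : Z ⟶ W)
    (h : ∀ {X Y : B} (f : X ⟶ Y),
      (E₁ (R.iUpperStar.map f) ∧ E₂ (R.jUpperStar.map f)) → CoconePerp f g) :
    M₁ (R.iShriek.map g) ∧ M₂ (R.jUpperStar.map g) := by
  letI := R.iStar_commShift; letI := R.iUpperStar_commShift; letI := R.iShriek_commShift
  letI := R.jUpperStar_commShift; letI := R.jShriek_commShift; letI := R.jStar_commShift
  haveI := R.iStar_triangulated; haveI := R.iUpperStar_triangulated
  haveI := R.iShriek_triangulated; haveI := R.jUpperStar_triangulated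
  haveI := R.jShriek_triangulated; haveI := R.jStar_triangulated
  obtain ⟨Kg, hKg⟩ := exists_cocone g
  constructor
  · rw [hA.right_eq]
    intro Z₁ W₁ f₁ hf₁
    obtain ⟨Kl, hKl⟩ := exists_cocone f₁
    have hp : PerpObjs (R.iStar.obj Kl) Kg :=
      (coconePerp_iff (hKl.map R.iStar) hKg).1 (h _ (R.iStar_map_mem_E hA hC hf₁))
    refine (coconePerp_iff hKl (hKg.map R.iShriek)).2 ⟨?_, ?_⟩
    · intro φ
      have h1 : (R.adj₂.homEquiv Kl Kg).symm φ = 0 := hp.1 _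
      have h2 := congrArg (R.adj₂.homEquiv Kl Kg) h1
      rwa [Equiv.apply_symm_apply, homEquiv_zero] at h2
    · intro φ
      have h4 : φ = (φ ≫ inv ((R.iShriek.commShiftIso (-1:ℤ)).hom.app Kg)) ≫
          ((R.iShriek.commShiftIso (-1:ℤ)).hom.app Kg) := by simp
      set φ' := φ ≫ inv ((R.iShriek.commShiftIso (-1:ℤ)).hom.app Kg) with hφ'
      have h1 : (R.adj₂.homEquiv Kl (Kg⟦(-1:ℤ)⟧)).symm φ' = 0 := hp.2 _
      have h2 := congrArg (R.adj₂.homEquiv Kl (Kg⟦(-1:ℤ)⟧)) h1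
      rw [Equiv.apply_symm_apply, homEquiv_zero] at h2
      rw [h4, h2, zero_comp]
  · rw [hC.right_eq]
    intro Z₂ W₂ f₂ hf₂
    obtain ⟨Kl, hKl⟩ := exists_cocone f₂
    have hp : PerpObjs (R.jShriek.obj Kl) Kg :=
      (coconePerp_iff (hKl.map R.jShriek) hKg).1 (h _ (R.jShriek_map_mem_E hA hC hf₂))
    refine (coconePerp_iff hKl (hKg.map R.jUpperStar)).2 ⟨?_, ?_⟩
    · intro φ
      have h1 : (R.adj₃.homEquiv Kl Kg).symm φ = 0 := hp.1 _
      have h2 := congrArg (R.adj₃.homEquiv Kl Kg) h1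
      rwa [Equiv.apply_symm_apply, homEquiv_zero] at h2
    · intro φ
      have h4 : φ = (φ ≫ inv ((R.jUpperStar.commShiftIso (-1:ℤ)).hom.app Kg)) ≫
          ((R.jUpperStar.commShiftIso (-1:ℤ)).hom.app Kg) := by simp
      set φ' := φ ≫ inv ((R.jUpperStar.commShiftIso (-1:ℤ)).hom.app Kg) with hφ'
      have h1 : (R.adj₃.homEquiv Kl (Kg⟦(-1:ℤ)⟧)).symm φ' = 0 := hp.2 _
      have h2 := congrArg (R.adj₃.homEquiv Kl (Kg⟦(-1:ℤ)⟧)) h1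
      rw [Equiv.apply_symm_apply, homEquiv_zero] at h2
      rw [h4, h2, zero_comp]


open ZeroObject in
lemma glue_factor {X Y : B} (f : X ⟶ Y) :
    ∃ (N : B) (l : X ⟶ N) (r : N ⟶ Y),
      (E₁ (R.iUpperStar.map l) ∧ E₂ (R.jUpperStar.map l)) ∧
      (M₁ (R.iShriek.map r) ∧ M₂ (R.jUpperStar.map r)) ∧ l ≫ r = f := by
  letI := R.iStar_commShift; letI := R.iUpperStar_commShift; letI := R.iShriek_commShift
  letI := R.jUpperStar_commShift; letI := R.jShriek_commShift; letI := R.jStar_commShift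
  haveI := R.iStar_triangulated; haveI := R.iUpperStar_triangulated
  haveI := R.iShriek_triangulated; haveI := R.jUpperStar_triangulated
  haveI := R.jShriek_triangulated; haveI := R.jStar_triangulated
  haveI := R.iStar_full; haveI := R.iStar_faithful; haveI := R.jShriek_full
  haveI := R.jShriek_faithful; haveI := R.jStar_full; haveI := R.jStar_faithful
  -- (1) a cocone of `f`
  obtain ⟨K, g, h, hD⟩ := distinguished_cocone_triangle₁ f
  -- (2) truncation of `j^* K` in `C`
  obtain ⟨N₂, e₂, m₂, he₂, hm₂, -⟩ := hC.factor (0 : R.jUpperStar.obj K ⟶ 0)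
  obtain ⟨U₂, hU₂⟩ := exists_cocone e₂
  have hm₂0 : m₂ = 0 := (isZero_zero C).eq_of_tgt _ _
  have hN₂ : IsCoconeOf m₂ N₂ :=
    ⟨𝟙 N₂, 0, by rw [hm₂0]; exact contractible_distinguished N₂⟩
  -- (3) `W`
  set w : K ⟶ R.jStar.obj N₂ := R.adj₄.unit.app K ≫ R.jStar.map e₂ with hw
  obtain ⟨W, aW, bW, hW⟩ := distinguished_cocone_triangle₁ w
  -- (4) truncation of `i^* W` in `A`
  obtain ⟨N₁, e₁, m₁, he₁, hm₁, -⟩ := hA.factor (0 : R.iUpperStar.obj W ⟶ 0)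
  obtain ⟨U₁, hU₁⟩ := exists_cocone e₁
  have hm₁0 : m₁ = 0 := (isZero_zero A).eq_of_tgt _ _
  have hN₁ : IsCoconeOf m₁ N₁ :=
    ⟨𝟙 N₁, 0, by rw [hm₁0]; exact contractible_distinguished N₁⟩
  -- (5) `K_E`
  set q : W ⟶ R.iStar.obj N₁ := R.adj₁.unit.app W ≫ R.iStar.map e₁ with hq
  obtain ⟨KE, c', bQ, hQ⟩ := distinguished_cocone_triangle₁ q
  -- (6) `K_M`
  set c : KE ⟶ K := c' ≫ aW with hc
  obtain ⟨KM, d, e, hCt⟩ := distinguished_cocone_triangle c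
  -- (7) `r : N ⟶ Y` with cocone `K_M`
  obtain ⟨N, u, r, hB⟩ := distinguished_cocone_triangle₂ (h ≫ (shiftFunctor B (1:ℤ)).map d)
  -- (8) the good lift `β`
  obtain ⟨β, hβ₁, hβ₂⟩ : ∃ β : X ⟶ N, g ≫ β = d ≫ u ∧ f ≫ 𝟙 Y = β ≫ r :=
    complete_distinguished_triangle_morphism₂
    (Triangle.mk g f h) (Triangle.mk u r (h ≫ (shiftFunctor B (1:ℤ)).map d)) hD hB d (𝟙 Y)
    (by exact (Category.id_comp _).symm)
  have hrf : β ≫ r = f := by simpa using hβ₂.symm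
  -- (9) a cocone of `β`
  obtain ⟨K', a', b', hAt⟩ := distinguished_cocone_triangle₁ β
  -- zero objects
  have hz₁ : IsZero (R.jUpperStar.obj (R.iStar.obj N₁)) := R.isZero_jU_iS N₁
  have hz₂ : IsZero (R.iShriek.obj (R.jStar.obj N₂)) := R.isZero_iSh_jSt N₂
  -- `j^*(c')` and `i^!(aW)` are isomorphisms
  have hTQj := R.jUpperStar.map_distinguished _ hQ
  have hiso_jc' : IsIso (R.jUpperStar.map c') :=
    (Triangle.isZero₃_iff_isIso₁ _ hTQj).1 hz₁
  have hTWi := R.iShriek.map_distinguished _ hW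
  have hiso_iaW : IsIso (R.iShriek.map aW) :=
    (Triangle.isZero₃_iff_isIso₁ _ hTWi).1 hz₂
  -- cocone computations for the `E`-side
  have hwcoc : IsCoconeOf w W := ⟨aW, bW, hW⟩
  have hqcoc : IsCoconeOf q KE := ⟨c', bQ, hQ⟩
  have hkey_e₂ : R.jUpperStar.map w ≫ R.adj₄.counit.app N₂ = e₂ := by
    rw [hw, Functor.map_comp, Category.assoc]
    have nat := R.adj₄.counit.naturality e₂
    dsimp at nat
    rw [nat, ← Category.assoc, R.adj₄.left_triangle_components K, Category.id_comp]
  have hcoc_e₂_jW : IsCoconeOf e₂ (R.jUpperStar.obj W) := by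
    have h0 := (hwcoc.map R.jUpperStar).comp_iso_right (R.adj₄.counit.app N₂)
    rwa [hkey_e₂] at h0
  have hkey_e₁ : R.iUpperStar.map q ≫ R.adj₁.counit.app N₁ = e₁ := by
    rw [hq, Functor.map_comp, Category.assoc]
    have nat := R.adj₁.counit.naturality e₁
    dsimp at nat
    rw [nat, ← Category.assoc, R.adj₁.left_triangle_components W, Category.id_comp]
  have hcoc_e₁_iKE : IsCoconeOf e₁ (R.iUpperStar.obj KE) := by
    have h0 := (hqcoc.map R.iUpperStar).comp_iso_right (R.adj₁.counit.app N₁)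
    rwa [hkey_e₁] at h0
  have hcoc_e₂_jKE : IsCoconeOf e₂ (R.jUpperStar.obj KE) :=
    hcoc_e₂_jW.of_iso_cocone (asIso (R.jUpperStar.map c')).symm
  -- cocone computations for the `M`-side
  have hTCj := R.jUpperStar.map_distinguished _ hCt
  have hTWj := R.jUpperStar.map_distinguished _ hW
  have hT₂d : Triangle.mk (R.jUpperStar.map c)
      (R.jUpperStar.map w ≫ R.adj₄.counit.app N₂)
      (inv (R.adj₄.counit.app N₂) ≫
        (R.jUpperStar.mapTriangle.obj (Triangle.mk aW w bW)).mor₃ ≫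
        (shiftFunctor C (1:ℤ)).map (inv (R.jUpperStar.map c') :
          R.jUpperStar.obj W ⟶ R.jUpperStar.obj KE)) ∈ distTriang C := by
    refine isomorphic_distinguished _ hTWj _ ?_
    refine Triangle.isoMk _ _ (asIso (R.jUpperStar.map c') : R.jUpperStar.obj KE ≅ R.jUpperStar.obj W) (Iso.refl _)
      (asIso (R.adj₄.counit.app N₂)).symm ?_ ?_ ?_
    · change R.jUpperStar.map c ≫ 𝟙 (R.jUpperStar.obj K) = R.jUpperStar.map c' ≫ R.jUpperStar.map aW
      rw [hc, Functor.map_comp, Category.comp_id]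
    · change (R.jUpperStar.map w ≫ R.adj₄.counit.app N₂) ≫ inv (R.adj₄.counit.app N₂) =
        𝟙 (R.jUpperStar.obj K) ≫ R.jUpperStar.map w
      simp
    · change (inv (R.adj₄.counit.app N₂) ≫ (R.jUpperStar.map bW ≫
          (R.jUpperStar.commShiftIso (1:ℤ)).hom.app W) ≫
          (shiftFunctor C (1:ℤ)).map (inv (R.jUpperStar.map c'))) ≫
          (shiftFunctor C (1:ℤ)).map (R.jUpperStar.map c') =
        inv (R.adj₄.counit.app N₂) ≫ (R.jUpperStar.map bW ≫
          (R.jUpperStar.commShiftIso (1:ℤ)).hom.app W)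
      simp only [Category.assoc, ← Functor.map_comp, IsIso.inv_hom_id, Functor.map_id,
        Category.comp_id, IsIso.inv_hom_id_assoc]
      simp
  have eJ : R.jUpperStar.obj KM ≅ N₂ :=
    Triangle.π₃.mapIso (isoTriangleOfIso₁₂ _ _ hTCj hT₂d (Iso.refl _) (Iso.refl _)
      (by exact (Category.comp_id _).trans (Category.id_comp _).symm))
  have hcoc_m₂_jKM : IsCoconeOf m₂ (R.jUpperStar.obj KM) := hN₂.of_iso_cocone eJ.symm
  have hTCi := R.iShriek.map_distinguished _ hCt
  have hTQi := R.iShriek.map_distinguished _ hQ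
  have hT₃d : Triangle.mk (R.iShriek.map c)
      (inv (R.iShriek.map aW) ≫ R.iShriek.map q ≫ inv (R.adj₂.unit.app N₁))
      (R.adj₂.unit.app N₁ ≫ (R.iShriek.mapTriangle.obj (Triangle.mk c' q bQ)).mor₃) ∈
      distTriang A := by
    refine isomorphic_distinguished _ hTQi _ ?_
    refine Triangle.isoMk _ _ (Iso.refl _) (asIso (R.iShriek.map aW)).symm
      (asIso (R.adj₂.unit.app N₁) : N₁ ≅ R.iShriek.obj (R.iStar.obj N₁)) ?_ ?_ ?_
    · change R.iShriek.map c ≫ inv (R.iShriek.map aW) = 𝟙 (R.iShriek.obj KE) ≫ R.iShriek.map c'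
      rw [hc, Functor.map_comp, Category.id_comp]
      simp
    · change (inv (R.iShriek.map aW) ≫ R.iShriek.map q ≫ inv (R.adj₂.unit.app N₁)) ≫
          R.adj₂.unit.app N₁ = inv (R.iShriek.map aW) ≫ R.iShriek.map q
      simp
    · change (R.adj₂.unit.app N₁ ≫ (R.iShriek.map bQ ≫ (R.iShriek.commShiftIso (1:ℤ)).hom.app KE)) ≫
          (shiftFunctor A (1:ℤ)).map (𝟙 (R.iShriek.obj KE)) =
        R.adj₂.unit.app N₁ ≫ (R.iShriek.map bQ ≫ (R.iShriek.commShiftIso (1:ℤ)).hom.app KE)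
      simp
  have eI : R.iShriek.obj KM ≅ N₁ :=
    Triangle.π₃.mapIso (isoTriangleOfIso₁₂ _ _ hTCi hT₃d (Iso.refl _) (Iso.refl _)
      (by exact (Category.comp_id _).trans (Category.id_comp _).symm))
  have hcoc_m₁_iKM : IsCoconeOf m₁ (R.iShriek.obj KM) := hN₁.of_iso_cocone eI.symm
  -- `r` belongs to the glued right class
  have hrcoc : IsCoconeOf r KM := ⟨u, h ≫ (shiftFunctor B (1:ℤ)).map d, hB⟩
  have hMr : M₁ (R.iShriek.map r) ∧ M₂ (R.jUpperStar.map r) :=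
    ⟨hA.mem_right_congr _ hcoc_m₁_iKM (hrcoc.map R.iShriek) hm₁,
     hC.mem_right_congr _ hcoc_m₂_jKM (hrcoc.map R.jUpperStar) hm₂⟩
  -- comparison morphisms
  obtain ⟨ψ₀, hψ₁, hψ₂0⟩ : ∃ ψ₀ : K' ⟶ K, a' ≫ 𝟙 X = ψ₀ ≫ g ∧
      b' ≫ (shiftFunctor B (1:ℤ)).map ψ₀ = r ≫ h := complete_distinguished_triangle_morphism₁
    (Triangle.mk a' β b') (Triangle.mk g f h) hAt hD (𝟙 X) r
    (by exact hrf.trans (Category.id_comp f).symm)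
  let ψ : K' ⟶ K := ψ₀
  have hψg : ψ ≫ g = a' := by
    show ψ₀ ≫ g = a'
    rw [← hψ₁, Category.comp_id]
  have hψ₂ : b' ≫ (shiftFunctor B (1:ℤ)).map ψ = r ≫ h := hψ₂0
  obtain ⟨θ, hθ₁, hθ₂⟩ : ∃ θ : KE ⟶ K', c ≫ g = θ ≫ a' ∧
      e ≫ (shiftFunctor B (1:ℤ)).map θ = u ≫ b' := complete_distinguished_triangle_morphism₁
    (Triangle.mk c d e) (Triangle.mk a' β b') hCt hAt g u (by exact hβ₁.symm)
  -- `ω₀`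
  have hbd0 : b' ≫ (shiftFunctor B (1:ℤ)).map (ψ ≫ d) = 0 := by
    rw [Functor.map_comp, ← Category.assoc, hψ₂, Category.assoc]
    exact comp_distTriang_mor_zero₂₃ _ hB
  obtain ⟨w₁, hw₁⟩ : ∃ w₁ : (shiftFunctor B (1:ℤ)).obj X ⟶ (shiftFunctor B (1:ℤ)).obj KM,
      (shiftFunctor B (1:ℤ)).map (ψ ≫ d) = (-(shiftFunctor B (1:ℤ)).map a') ≫ w₁ := Triangle.yoneda_exact₃ _ (rot_of_distTriang _ hAt)
    ((shiftFunctor B (1:ℤ)).map (ψ ≫ d)) (by exact hbd0)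
  set ω₀ : X ⟶ KM := -((shiftFunctor B (1:ℤ)).preimage w₁) with hω₀
  have hψd : ψ ≫ d = a' ≫ ω₀ := by
    apply (shiftFunctor B (1:ℤ)).map_injective
    rw [hw₁, hω₀]
    rw [Functor.map_comp, Functor.map_neg, Functor.map_preimage, Preadditive.neg_comp,
      Preadditive.comp_neg]
  -- `ν` and the corrected comparison `ψ'`
  have haωu : (a' ≫ ω₀) ≫ u = 0 := by
    rw [← hψd, Category.assoc, ← hβ₁, ← Category.assoc, hψg]
    exact comp_distTriang_mor_zero₁₂ _ hAt
  obtain ⟨ϖ, hϖ⟩ : ∃ ϖ : (shiftFunctor B (1:ℤ)).obj K' ⟶ Y, (shiftFunctor B (1:ℤ)).map (a' ≫ ω₀) = ϖ ≫ h ≫ (shiftFunctor B (1:ℤ)).map d :=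
    Triangle.coyoneda_exact₃ _ (rot_of_distTriang _ hB)
    ((shiftFunctor B (1:ℤ)).map (a' ≫ ω₀)) (by
      change (shiftFunctor B (1:ℤ)).map (a' ≫ ω₀) ≫ (-(shiftFunctor B (1:ℤ)).map u) = 0
      rw [Preadditive.comp_neg, ← Functor.map_comp, haωu, Functor.map_zero, neg_zero])
  set ν : K' ⟶ K := (shiftFunctor B (1:ℤ)).preimage (ϖ ≫ h) with hν
  have hνd : ν ≫ d = a' ≫ ω₀ := by
    apply (shiftFunctor B (1:ℤ)).map_injective
    rw [Functor.map_comp, hν, Functor.map_preimage, Category.assoc, hϖ]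
  have hνg : ν ≫ g = 0 := by
    apply (shiftFunctor B (1:ℤ)).map_injective
    rw [Functor.map_comp, hν, Functor.map_preimage, Category.assoc, Functor.map_zero]
    have h31 : h ≫ (shiftFunctor B (1:ℤ)).map g = 0 := comp_distTriang_mor_zero₃₁ _ hD
    rw [h31, comp_zero]
  set ψ' : K' ⟶ K := ψ - ν with hψ'
  have hψ'g : ψ' ≫ g = a' := by
    rw [hψ', Preadditive.sub_comp, hψg, hνg, sub_zero]
  have hψ'd : ψ' ≫ d = 0 := by
    rw [hψ', Preadditive.sub_comp, hψd, hνd, sub_self]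
  obtain ⟨τ, hτ⟩ : ∃ τ : K' ⟶ KE, ψ' = τ ≫ c :=
    Triangle.coyoneda_exact₂ _ hCt ψ' (by exact hψ'd)
  have hKeyA : a' = τ ≫ (c ≫ g) := by
    rw [← hψ'g, hτ, Category.assoc]
  -- the master vanishing lemma
  have master : ∀ (Q : B), (∀ κ : KE ⟶ Q, κ = 0) → ∀ φ : K' ⟶ Q, φ = 0 := by
    intro Q hQ0 φ
    apply (shiftFunctor B (1:ℤ)).map_injective
    rw [Functor.map_zero]
    have st1 : u ≫ (b' ≫ (shiftFunctor B (1:ℤ)).map φ) = 0 := by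
      rw [← Category.assoc, ← hθ₂, Category.assoc, ← Functor.map_comp, hQ0 (θ ≫ φ),
        Functor.map_zero, comp_zero]
    obtain ⟨ρ', hρ'⟩ : ∃ ρ' : Y ⟶ (shiftFunctor B (1:ℤ)).obj Q, b' ≫ (shiftFunctor B (1:ℤ)).map φ = r ≫ ρ' :=
      Triangle.yoneda_exact₂ _ hB (b' ≫ (shiftFunctor B (1:ℤ)).map φ)
      (by exact st1)
    have st3 : f ≫ ρ' = 0 := by
      have hb0 : β ≫ b' = 0 := comp_distTriang_mor_zero₂₃ _ hAt
      have h5 : β ≫ (b' ≫ (shiftFunctor B (1:ℤ)).map φ) = 0 := by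
        rw [← Category.assoc, hb0, zero_comp]
      rw [hρ', ← Category.assoc, hrf] at h5
      exact h5
    obtain ⟨ρ₂', hρ₂'⟩ : ∃ ρ₂' : (shiftFunctor B (1:ℤ)).obj K ⟶ (shiftFunctor B (1:ℤ)).obj Q, ρ' = h ≫ ρ₂' :=
      Triangle.yoneda_exact₃ _ hD ρ' (by exact st3)
    have st5 : b' ≫ ((shiftFunctor B (1:ℤ)).map φ - (shiftFunctor B (1:ℤ)).map ψ ≫ ρ₂') = 0 := by
      have e1 : b' ≫ (shiftFunctor B (1:ℤ)).map φ = (r ≫ h) ≫ ρ₂' := by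
        rw [hρ', hρ₂', Category.assoc]
      have e2 : b' ≫ (shiftFunctor B (1:ℤ)).map ψ ≫ ρ₂' = (r ≫ h) ≫ ρ₂' := by
        rw [← Category.assoc, hψ₂]
      rw [Preadditive.comp_sub, e1, e2, sub_self]
    obtain ⟨χ', hχ'⟩ : ∃ χ' : (shiftFunctor B (1:ℤ)).obj X ⟶ (shiftFunctor B (1:ℤ)).obj Q,
        (shiftFunctor B (1:ℤ)).map φ - (shiftFunctor B (1:ℤ)).map ψ ≫ ρ₂' = (-(shiftFunctor B (1:ℤ)).map a') ≫ χ' :=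
      Triangle.yoneda_exact₃ _ (rot_of_distTriang _ hAt) _ (by exact st5)
    set ρ₂ : K ⟶ Q := (shiftFunctor B (1:ℤ)).preimage ρ₂' with hρ₂def
    have hρmap : (shiftFunctor B (1:ℤ)).map ρ₂ = ρ₂' := Functor.map_preimage _ _
    obtain ⟨ρ₃, hρ₃⟩ : ∃ ρ₃ : KM ⟶ Q, ρ₂ = d ≫ ρ₃ :=
      Triangle.yoneda_exact₂ _ hCt ρ₂ (by exact hQ0 _)
    set χ₀ : X ⟶ Q := (shiftFunctor B (1:ℤ)).preimage χ' with hχ₀def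
    have hχmap : (shiftFunctor B (1:ℤ)).map χ₀ = χ' := Functor.map_preimage _ _
    have hz1 : (shiftFunctor B (1:ℤ)).map ψ ≫ ρ₂' = 0 := by
      have h6 : ψ ≫ ρ₂ = τ ≫ (c ≫ (g ≫ ω₀ ≫ ρ₃)) := by
        rw [hρ₃, ← Category.assoc, hψd, hKeyA]
        simp only [Category.assoc]
      calc (shiftFunctor B (1:ℤ)).map ψ ≫ ρ₂'
          = (shiftFunctor B (1:ℤ)).map (ψ ≫ ρ₂) := by rw [Functor.map_comp, hρmap]
        _ = (shiftFunctor B (1:ℤ)).map (τ ≫ (c ≫ (g ≫ ω₀ ≫ ρ₃))) := by rw [h6]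
        _ = 0 := by rw [hQ0 (c ≫ (g ≫ ω₀ ≫ ρ₃)), comp_zero, Functor.map_zero]
    have hz2 : (shiftFunctor B (1:ℤ)).map φ - (shiftFunctor B (1:ℤ)).map ψ ≫ ρ₂' = 0 := by
      rw [hχ']
      have h7 : a' ≫ χ₀ = 0 := by
        simp only [hKeyA, Category.assoc]
        rw [hQ0 (c ≫ g ≫ χ₀), comp_zero]
      rw [Preadditive.neg_comp, ← hχmap, ← Functor.map_comp, h7, Functor.map_zero, neg_zero]
    calc (shiftFunctor B (1:ℤ)).map φ
        = ((shiftFunctor B (1:ℤ)).map φ - (shiftFunctor B (1:ℤ)).map ψ ≫ ρ₂') +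
          (shiftFunctor B (1:ℤ)).map ψ ≫ ρ₂' := by abel
      _ = 0 := by rw [hz2, hz1, add_zero]
  -- `β` belongs to the glued left class
  have hβcoc : IsCoconeOf β K' := ⟨a', b', hAt⟩
  have hEβ : E₁ (R.iUpperStar.map β) ∧ E₂ (R.jUpperStar.map β) := by
    constructor
    · rw [hA.left_eq]
      intro Z₁ W₁ g₁ hg₁
      obtain ⟨Kr, hKr⟩ := exists_cocone g₁
      have hperp : PerpObjs (R.iUpperStar.obj KE) Kr :=
        (coconePerp_iff hcoc_e₁_iKE hKr).1 (hA.perp he₁ hg₁)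
      refine (coconePerp_iff (hβcoc.map R.iUpperStar) hKr).2 ⟨?_, ?_⟩
      · intro φ
        have hQ0 : ∀ κ : KE ⟶ R.iStar.obj Kr, κ = 0 := by
          intro κ
          have h1 : (R.adj₁.homEquiv KE Kr).symm κ = 0 := hperp.1 _
          have h2 := congrArg (R.adj₁.homEquiv KE Kr) h1
          rwa [Equiv.apply_symm_apply, homEquiv_zero] at h2
        have h1 : (R.adj₁.homEquiv K' Kr) φ = 0 := master _ hQ0 _
        have h2 := congrArg (R.adj₁.homEquiv K' Kr).symm h1
        rwa [Equiv.symm_apply_apply, homEquiv_symm_zero] at h2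
      · intro φ
        have hQ0 : ∀ κ : KE ⟶ R.iStar.obj (Kr⟦(-1:ℤ)⟧), κ = 0 := by
          intro κ
          have h1 : (R.adj₁.homEquiv KE (Kr⟦(-1:ℤ)⟧)).symm κ = 0 := hperp.2 _
          have h2 := congrArg (R.adj₁.homEquiv KE (Kr⟦(-1:ℤ)⟧)) h1
          rwa [Equiv.apply_symm_apply, homEquiv_zero] at h2
        have h1 : (R.adj₁.homEquiv K' (Kr⟦(-1:ℤ)⟧)) φ = 0 := master _ hQ0 _
        have h2 := congrArg (R.adj₁.homEquiv K' (Kr⟦(-1:ℤ)⟧)).symm h1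
        rwa [Equiv.symm_apply_apply, homEquiv_symm_zero] at h2
    · rw [hC.left_eq]
      intro Z₂ W₂ g₂ hg₂
      obtain ⟨Kr, hKr⟩ := exists_cocone g₂
      have hperp : PerpObjs (R.jUpperStar.obj KE) Kr :=
        (coconePerp_iff hcoc_e₂_jKE hKr).1 (hC.perp he₂ hg₂)
      refine (coconePerp_iff (hβcoc.map R.jUpperStar) hKr).2 ⟨?_, ?_⟩
      · intro φ
        have hQ0 : ∀ κ : KE ⟶ R.jStar.obj Kr, κ = 0 := by
          intro κ
          have h1 : (R.adj₄.homEquiv KE Kr).symm κ = 0 := hperp.1 _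
          have h2 := congrArg (R.adj₄.homEquiv KE Kr) h1
          rwa [Equiv.apply_symm_apply, homEquiv_zero] at h2
        have h1 : (R.adj₄.homEquiv K' Kr) φ = 0 := master _ hQ0 _
        have h2 := congrArg (R.adj₄.homEquiv K' Kr).symm h1
        rwa [Equiv.symm_apply_apply, homEquiv_symm_zero] at h2
      · intro φ
        have hQ0 : ∀ κ : KE ⟶ R.jStar.obj (Kr⟦(-1:ℤ)⟧), κ = 0 := by
          intro κ
          have h1 : (R.adj₄.homEquiv KE (Kr⟦(-1:ℤ)⟧)).symm κ = 0 := hperp.2 _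
          have h2 := congrArg (R.adj₄.homEquiv KE (Kr⟦(-1:ℤ)⟧)) h1
          rwa [Equiv.apply_symm_apply, homEquiv_zero] at h2
        have h1 : (R.adj₄.homEquiv K' (Kr⟦(-1:ℤ)⟧)) φ = 0 := master _ hQ0 _
        have h2 := congrArg (R.adj₄.homEquiv K' (Kr⟦(-1:ℤ)⟧)).symm h1
        rwa [Equiv.symm_apply_apply, homEquiv_symm_zero] at h2
  exact ⟨N, β, r, hEβ, hMr, hrf⟩

end TriangulatedRecollement

/-- gluing deflation factorization systems along a recollement of
triangulated categories. -/
theorem glue_deflFactorizationSystem_of_recollement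
    (R : TriangulatedRecollement A B C)
    (E₁ M₁ : MorphismProperty A) (E₂ M₂ : MorphismProperty C)
    (hA : IsDeflFactorizationSystem E₁ M₁) (hC : IsDeflFactorizationSystem E₂ M₂) :
    IsDeflFactorizationSystem
      (fun _ _ f => E₁ (R.iUpperStar.map f) ∧ E₂ (R.jUpperStar.map f))
      (fun _ _ g => M₁ (R.iShriek.map g) ∧ M₂ (R.jUpperStar.map g)) := by
  refine ⟨?_, ?_, ?_⟩
  · intro X Y f
    obtain ⟨N, l, r, hE, hM, hlr⟩ := R.glue_factor hA hC f
    exact ⟨N, l, r, hE, hM, hlr⟩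
  · intro X Y f
    constructor
    · intro hf Z W g hg
      exact TriangulatedRecollement.glue_perp R hA hC f g hf hg
    · intro hf
      exact TriangulatedRecollement.glue_left R hA hC f (fun g hg => hf g hg)
  · intro Z W g
    constructor
    · intro hg X Y f hf
      exact TriangulatedRecollement.glue_perp R hA hC f g hf hg
    · intro hg
      exact TriangulatedRecollement.glue_right R hA hC g (fun f hf => hg f hf)

end RecollementFS
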